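/- Let n ≥ 1 and d ≥ 2 be integers, let μ_d ⊂ C be the set of d-th roots of unity, and let F = ∏_{(ε_1,...,ε_n) ∈ μ_d^n} (x_1 + ε_1 x_2 + ... + ε_n x_{n+1}) in C[x_1,...,x_{n+1}]. Then (x_1 + x_2 + ... + x_{n+1}) divides F, the quotient G = F/(x_1 + ... + x_{n+1}) is a nonzero homogeneous polynomial of degree d^n − 1 which does not lie in the ideal J = (x_1^d,...,x_{n+1}^d)^{d^{n−1}}, and (x_1 + ... + x_{n+1})·G lies in J. Consequently, multiplication by the linear form x_1 + ... + x_{n+1} on the graded ring C[x_1,...,x_{n+1}]/J is not injective in degree d^n − 1. -/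

import Mathlib

open MvPolynomial

/-- The degree-`i` homogeneous component of the quotient `ℂ[x_1,…,x_n]/J`,
realized as the image of the space of homogeneous polynomials of degree `i`. -/
noncomputable def quotComp {n : ℕ} (J : Ideal (MvPolynomial (Fin n) ℂ)) (i : ℕ) :
    Submodule ℂ (MvPolynomial (Fin n) ℂ ⧸ J) :=
  Submodule.map (Ideal.Quotient.mkₐ ℂ J).toLinearMap (homogeneousSubmodule (Fin n) ℂ i)


lemma prod_pow_mem_pow {R : Type*} [CommRing R] (I : Ideal R) {ι : Type*}
    (s : Finset ι) (f : ι → R) (b : ι → ℕ) (h : ∀ i ∈ s, f i ∈ I) :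
    (∏ i ∈ s, f i ^ b i) ∈ I ^ (∑ i ∈ s, b i) := by
  classical
  induction s using Finset.induction with
  | empty => simp
  | insert _ _ hx ih =>
    rw [Finset.prod_insert hx, Finset.sum_insert hx, pow_add]
    exact Ideal.mul_mem_mul (Ideal.pow_mem_pow (h _ (Finset.mem_insert_self _ _)) _)
      (ih fun i hi => h i (Finset.mem_insert_of_mem hi))

lemma deg_bound {σ : Type*} (d m : ℕ)
    {p : MvPolynomial σ ℂ}
    (hp : p ∈ (Ideal.span (Set.range fun i : σ => (X i : MvPolynomial σ ℂ) ^ d)) ^ m)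
    {s : σ →₀ ℕ} (hs : s ∈ p.support) : d * m ≤ s.degree := by
  classical
  set P : ℕ → MvPolynomial σ ℂ → Prop :=
    fun N q => ∀ t ∈ q.support, N ≤ Finsupp.degree t with hP
  have Padd : ∀ N x y, P N x → P N y → P N (x + y) := by
    intro N x y hx hy t ht
    rcases Finset.mem_union.mp (MvPolynomial.support_add ht) with h | h
    · exact hx t h
    · exact hy t h
  have Pmul : ∀ N M x y, P N x → P M y → P (N + M) (x * y) := by
    intro N M x y hx hy t ht
    rcases Finset.mem_add.mp (MvPolynomial.support_mul x y ht) with ⟨a, ha, b, hb, rfl⟩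
    have hdeg : Finsupp.degree (a + b) = Finsupp.degree a + Finsupp.degree b := by
      simp only [Finsupp.degree_eq_weight_one, map_add]
    rw [hdeg]
    exact Nat.add_le_add (hx a ha) (hy b hb)
  have Pbase : ∀ x ∈ Ideal.span (Set.range fun i : σ => (X i : MvPolynomial σ ℂ) ^ d), P d x := by
    intro x hx
    refine Submodule.span_induction ?_ ?_ ?_ ?_ hx
    · rintro _ ⟨i, rfl⟩ t ht
      change t ∈ ((X i : MvPolynomial σ ℂ) ^ d).support at ht
      rw [MvPolynomial.X_pow_eq_monomial, MvPolynomial.support_monomial] at ht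
      simp only [if_neg one_ne_zero, Finset.mem_singleton] at ht
      subst ht
      simp [Finsupp.degree_eq_weight_one, Finsupp.weight_apply, Finsupp.sum_single_index]
    · intro t ht; simp at ht
    · intro x y _ _ hx hy; exact Padd d x y hx hy
    · intro r x _ hx
      have : r • x = r * x := rfl
      rw [this]
      have := Pmul 0 d r x (fun t _ => Nat.zero_le _) hx
      simpa using this
  have main : ∀ M q, q ∈ (Ideal.span (Set.range fun i : σ =>
      (X i : MvPolynomial σ ℂ) ^ d)) ^ M → P (d * M) q := by
    intro M
    induction M with
    | zero => intro q _ t _; simp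
    | succ M ih =>
      intro q hq
      rw [pow_succ] at hq
      refine Submodule.mul_induction_on hq ?_ ?_
      · intro x hx y hy
        have := Pmul (d * M) d x y (ih x hx) (Pbase y hy)
        simpa [Nat.mul_succ] using this
      · intro x y hx hy; exact Padd _ x y hx hy
  exact main m p hp s hs

lemma aeval_scale_monomial {σ : Type*} [DecidableEq σ] (ζ : ℂ) (j : σ)
    (t : σ →₀ ℕ) (c : ℂ) :
    aeval (fun i => if i = j then C ζ * X i else X i) (monomial t c)
      = C (ζ ^ t j) * monomial t c := by
  rw [aeval_monomial]
  have h1 : (t.prod fun i e => (if i = j then C ζ * (X i : MvPolynomial σ ℂ) else X i) ^ e)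
      = C (ζ ^ t j) * t.prod fun i e => (X i : MvPolynomial σ ℂ) ^ e := by
    rw [Finsupp.prod, Finsupp.prod]
    have : ∀ i ∈ t.support,
        ((if i = j then C ζ * (X i : MvPolynomial σ ℂ) else X i) ^ t i)
          = (if i = j then C ζ ^ t i else 1) * (X i : MvPolynomial σ ℂ) ^ t i := by
      intro i _
      split <;> simp [mul_pow]
    rw [Finset.prod_congr rfl this, Finset.prod_mul_distrib, Finset.prod_ite_eq' t.support j
      (fun i => (C ζ : MvPolynomial σ ℂ) ^ t i)]
    by_cases hj : j ∈ t.support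
    · rw [if_pos hj, ← C_pow]
    · rw [if_neg hj, Finsupp.notMem_support_iff.mp hj, pow_zero, C_1]
  rw [h1, monomial_eq]
  ring_nf
  simp [algebraMap_eq]
  ring

lemma coeff_aeval_scale {σ : Type*} [DecidableEq σ] (ζ : ℂ) (j : σ)
    (p : MvPolynomial σ ℂ) (s : σ →₀ ℕ) :
    coeff s (aeval (fun i => if i = j then C ζ * X i else X i) p)
      = ζ ^ s j * coeff s p := by
  conv_lhs => rw [p.as_sum]
  rw [map_sum, MvPolynomial.coeff_sum]
  have : ∀ t ∈ p.support,
      coeff s (aeval (fun i => if i = j then C ζ * X i else X i) (monomial t (coeff t p)))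
        = if t = s then ζ ^ s j * coeff s p else 0 := by
    intro t _
    rw [aeval_scale_monomial, coeff_C_mul, coeff_monomial]
    split
    · rename_i h; subst h; simp
    · simp
  rw [Finset.sum_congr rfl this, Finset.sum_ite_eq' p.support s
    (fun _ => ζ ^ s j * coeff s p)]
  by_cases hs : s ∈ p.support
  · rw [if_pos hs]
  · rw [if_neg hs, MvPolynomial.notMem_support_iff.mp hs, mul_zero]

theorem stmt_5 (n d : ℕ) (hn : 1 ≤ n) (hd : 2 ≤ d) :
    ∃ G : MvPolynomial (Fin (n + 1)) ℂ,
      (∏ ε ∈ Fintype.piFinset (fun _ : Fin n => Polynomial.nthRootsFinset d (1 : ℂ)),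
          ((X 0 : MvPolynomial (Fin (n + 1)) ℂ) + ∑ i : Fin n, C (ε i) * X i.succ))
        = (∑ i : Fin (n + 1), X i) * G ∧
      G ≠ 0 ∧ G.IsHomogeneous (d ^ n - 1) ∧
      G ∉ (Ideal.span (Set.range fun i : Fin (n + 1) =>
            (X i : MvPolynomial (Fin (n + 1)) ℂ) ^ d)) ^ (d ^ (n - 1)) ∧
      (∑ i : Fin (n + 1), (X i : MvPolynomial (Fin (n + 1)) ℂ)) * G
        ∈ (Ideal.span (Set.range fun i : Fin (n + 1) =>
            (X i : MvPolynomial (Fin (n + 1)) ℂ) ^ d)) ^ (d ^ (n - 1)) ∧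
      ¬ (∀ x ∈ quotComp ((Ideal.span (Set.range fun i : Fin (n + 1) =>
              (X i : MvPolynomial (Fin (n + 1)) ℂ) ^ d)) ^ (d ^ (n - 1))) (d ^ n - 1),
          Ideal.Quotient.mk _ (∑ i : Fin (n + 1), (X i : MvPolynomial (Fin (n + 1)) ℂ)) * x = 0
            → x = 0) := by
  classical
  have hdpos : 0 < d := by omega
  have hd0 : d ≠ 0 := hdpos.ne'
  obtain ⟨ζ, hζ⟩ : ∃ z : ℂ, IsPrimitiveRoot z d := ⟨_, Complex.isPrimitiveRoot_exp d hd0⟩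
  have hζd : ζ ^ d = 1 := hζ.pow_eq_one
  have hζmem : ζ ∈ Polynomial.nthRootsFinset d (1 : ℂ) := (Polynomial.mem_nthRootsFinset hdpos (1 : ℂ)).2 hζd
  have hζne : ζ ≠ 0 := fun h => by simp [h, zero_pow hd0] at hζd
  have hζinv : ζ⁻¹ ∈ Polynomial.nthRootsFinset d (1 : ℂ) :=
    (Polynomial.mem_nthRootsFinset hdpos (1 : ℂ)).2 (by rw [inv_pow, hζd, inv_one])
  set P := Fintype.piFinset (fun _ : Fin n => Polynomial.nthRootsFinset d (1 : ℂ)) with hPdef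
  set F := ∏ ε ∈ P,
      ((X 0 : MvPolynomial (Fin (n + 1)) ℂ) + ∑ i : Fin n, C (ε i) * X i.succ) with hF
  set I := Ideal.span (Set.range fun i : Fin (n + 1) =>
      (X i : MvPolynomial (Fin (n + 1)) ℂ) ^ d) with hI
  set m := d ^ (n - 1) with hm
  have hdm : d * m = d ^ n := by
    rw [hm, ← pow_succ']
    congr 1
    omega
  have hPcard : P.card = d ^ n := by
    rw [hPdef, Fintype.card_piFinset]
    simp [hζ.card_nthRootsFinset]
  -- homogeneity of the linear factors
  have hℓhom : ∀ ε : Fin n → ℂ,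
      ((X 0 : MvPolynomial (Fin (n + 1)) ℂ) + ∑ i : Fin n, C (ε i) * X i.succ).IsHomogeneous 1 := by
    intro ε
    refine (isHomogeneous_X _ _).add ?_
    exact IsHomogeneous.sum _ _ _ fun i _ => isHomogeneous_C_mul_X _ _
  have hFhom : F.IsHomogeneous (d ^ n) := by
    have := IsHomogeneous.prod P _ (fun _ : Fin n → ℂ => 1) (fun ε _ => hℓhom ε)
    simpa [hPcard] using this
  -- scaling invariance
  have haeval : ∀ (k : Fin n) (ε : Fin n → ℂ),
      aeval (fun i : Fin (n+1) => if i = Fin.succ k then C ζ * X i else X i)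
        ((X 0 : MvPolynomial (Fin (n + 1)) ℂ) + ∑ i : Fin n, C (ε i) * X i.succ)
      = (X 0 : MvPolynomial (Fin (n + 1)) ℂ)
          + ∑ i : Fin n, C (if i = k then ε i * ζ else ε i) * X i.succ := by
    intro k ε
    rw [map_add, map_sum, aeval_X, if_neg (Fin.succ_ne_zero k).symm]
    congr 1
    refine Finset.sum_congr rfl fun i _ => ?_
    rw [map_mul, aeval_C, aeval_X, algebraMap_eq]
    by_cases h : i = k
    · subst h
      rw [if_pos rfl, if_pos (by simp), map_mul]
      ring
    · rw [if_neg h, if_neg (by simpa [Fin.succ_inj] using h)]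
  have hstab : ∀ k : Fin n,
      aeval (fun i : Fin (n+1) => if i = Fin.succ k then C ζ * X i else X i) F = F := by
    intro k
    rw [hF, map_prod]
    refine Finset.prod_nbij' (fun ε => fun i : Fin n => if i = k then ε i * ζ else ε i)
      (fun ε => fun i : Fin n => if i = k then ε i * ζ⁻¹ else ε i) ?_ ?_ ?_ ?_ ?_
    · intro ε hε
      rw [hPdef, Fintype.mem_piFinset] at hε ⊢
      intro i
      show (if i = k then ε i * ζ else ε i) ∈ Polynomial.nthRootsFinset d (1 : ℂ)
      split
      · have := Polynomial.mul_mem_nthRootsFinset (hε i) hζmem; rwa [mul_one] at this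
      · exact hε i
    · intro ε hε
      rw [hPdef, Fintype.mem_piFinset] at hε ⊢
      intro i
      show (if i = k then ε i * ζ⁻¹ else ε i) ∈ Polynomial.nthRootsFinset d (1 : ℂ)
      split
      · have := Polynomial.mul_mem_nthRootsFinset (hε i) hζinv; rwa [mul_one] at this
      · exact hε i
    · intro ε _
      funext i
      by_cases h : i = k <;> simp [h, mul_assoc, mul_inv_cancel₀ hζne]
    · intro ε _
      funext i
      by_cases h : i = k <;> simp [h, mul_assoc, inv_mul_cancel₀ hζne]
    · intro ε _
      exact haeval k ε
  -- divisibility of the exponents in the support of F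
  have hdvds : ∀ s ∈ F.support, ∀ k : Fin n, d ∣ s k.succ := by
    intro s hs k
    have hcs : coeff s F ≠ 0 := mem_support_iff.mp hs
    have h1 := coeff_aeval_scale ζ (Fin.succ k) F s
    rw [hstab k] at h1
    have h2 : ζ ^ s (Fin.succ k) * coeff s F = 1 * coeff s F := by
      rw [one_mul, ← h1]
    have h3 : ζ ^ s (Fin.succ k) = 1 := mul_right_cancel₀ hcs h2
    exact (hζ.pow_eq_one_iff_dvd _).mp h3
  have hsum : ∀ s ∈ F.support, ∑ i : Fin (n + 1), s i = d ^ n := by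
    intro s hs
    have h1 : Finsupp.degree s = d ^ n := by
      rw [Finsupp.degree_eq_weight_one]
      exact hFhom (mem_support_iff.mp hs)
    rw [← h1, Finsupp.degree]
    exact (Finset.sum_subset (Finset.subset_univ _)
      (fun i _ hi => Finsupp.notMem_support_iff.mp hi)).symm
  have hdvd : ∀ s ∈ F.support, ∀ j : Fin (n + 1), d ∣ s j := by
    intro s hs j
    refine Fin.cases ?_ (fun k => hdvds s hs k) j
    have h1 := hsum s hs
    rw [Fin.sum_univ_succ] at h1
    have h2 : d ∣ ∑ i : Fin n, s i.succ := Finset.dvd_sum fun i _ => hdvds s hs i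
    have h3 : d ∣ d ^ n := dvd_pow_self d (by omega)
    exact (Nat.dvd_add_iff_left h2).mpr (h1 ▸ h3)
  -- F ∈ I ^ m
  have hFmem : F ∈ I ^ m := by
    nth_rewrite 1 [F.as_sum]
    refine Submodule.sum_mem _ fun s hs => ?_
    have hdv := hdvd s hs
    have hmono : (monomial s (coeff s F) : MvPolynomial (Fin (n + 1)) ℂ)
        = C (coeff s F) * ∏ i : Fin (n + 1), ((X i) ^ d) ^ (s i / d) := by
      rw [monomial_eq]
      congr 1
      rw [Finsupp.prod_fintype _ _ (fun i => pow_zero _)]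
      refine Finset.prod_congr rfl fun i _ => ?_
      rw [← pow_mul, Nat.mul_div_cancel' (hdv i)]
    have hb : ∑ i : Fin (n + 1), s i / d = m := by
      have h4 : d * (∑ i : Fin (n + 1), s i / d) = d * m := by
        rw [Finset.mul_sum, hdm, ← hsum s hs]
        exact Finset.sum_congr rfl fun i _ => Nat.mul_div_cancel' (hdv i)
      exact Nat.eq_of_mul_eq_mul_left hdpos h4
    rw [hmono, ← hb]
    exact Ideal.mul_mem_left _ _ (prod_pow_mem_pow I Finset.univ _ _
      (fun i _ => Ideal.subset_span ⟨i, rfl⟩))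
  -- split off the factor at ε = 1
  have h1P : (fun _ : Fin n => (1 : ℂ)) ∈ P := by
    rw [hPdef, Fintype.mem_piFinset]
    exact fun i => Polynomial.one_mem_nthRootsFinset hdpos
  set G := ∏ ε ∈ P.erase (fun _ : Fin n => (1 : ℂ)),
      ((X 0 : MvPolynomial (Fin (n + 1)) ℂ) + ∑ i : Fin n, C (ε i) * X i.succ) with hG
  have hℓ1 : ((X 0 : MvPolynomial (Fin (n + 1)) ℂ)
      + ∑ i : Fin n, C ((fun _ : Fin n => (1:ℂ)) i) * X i.succ)
      = ∑ i : Fin (n + 1), X i := by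
    rw [Fin.sum_univ_succ]
    simp
  have hFG : F = (∑ i : Fin (n + 1), X i) * G := by
    rw [hF, hG, ← Finset.mul_prod_erase P _ h1P, hℓ1]
  have hGne : G ≠ 0 := by
    intro h0
    have heval : eval (fun j : Fin (n + 1) => if j = 0 then (1 : ℂ) else 0) G = 1 := by
      rw [hG, map_prod]
      refine Finset.prod_eq_one fun ε _ => ?_
      simp [Fin.succ_ne_zero]
    rw [h0, map_zero] at heval
    exact zero_ne_one heval
  have hGcard : (P.erase (fun _ : Fin n => (1 : ℂ))).card = d ^ n - 1 := by
    rw [Finset.card_erase_of_mem h1P, hPcard]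
  have hGhom : G.IsHomogeneous (d ^ n - 1) := by
    have := IsHomogeneous.prod (P.erase (fun _ : Fin n => (1 : ℂ))) _
      (fun _ : Fin n → ℂ => 1) (fun ε _ => hℓhom ε)
    simpa [hGcard] using this
  have hGnot : G ∉ I ^ m := by
    intro hGmem
    obtain ⟨s, hs⟩ : G.support.Nonempty := support_nonempty.mpr hGne
    have h1 := deg_bound d m hGmem hs
    have h2 : Finsupp.degree s = d ^ n - 1 := by
      rw [Finsupp.degree_eq_weight_one]
      exact hGhom (mem_support_iff.mp hs)
    rw [h2, hdm] at h1
    have : 0 < d ^ n := pow_pos hdpos n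
    omega
  have hLG : (∑ i : Fin (n + 1), (X i : MvPolynomial (Fin (n + 1)) ℂ)) * G ∈ I ^ m := by
    rw [← hFG]
    exact hFmem
  refine ⟨G, hFG, hGne, hGhom, hGnot, hLG, ?_⟩
  intro hinj
  have hGq : (Ideal.Quotient.mk (I ^ m) G) ∈ quotComp (I ^ m) (d ^ n - 1) :=
    ⟨G, hGhom, rfl⟩
  have h0 : Ideal.Quotient.mk (I ^ m) (∑ i : Fin (n + 1), (X i : MvPolynomial (Fin (n + 1)) ℂ))
      * Ideal.Quotient.mk (I ^ m) G = 0 := by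
    rw [← map_mul, Ideal.Quotient.eq_zero_iff_mem]
    exact hLG
  have := hinj _ hGq h0
  rw [Ideal.Quotient.eq_zero_iff_mem] at this
  exact hGnot this
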